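/- A semilattice equipped with the order-algebraic convexity (convex sets are the order-convex subsemilattices) is a convex geometry if and only if it is a tree, i.e. every principal filter ↑x is a chain. -/
import Mathlib


/-- The order-algebraic convexity on a semilattice: order-convex subsemilattices. -/
def OrderAlgConvex {S : Type*} [SemilatticeSup S] (T : Set S) : Prop :=
  (∀ ⦃x⦄, x ∈ T → ∀ ⦃y⦄, y ∈ T → x ⊔ y ∈ T) ∧
  ∀ ⦃x z : S⦄, x ∈ T → z ∈ T → ∀ ⦃y : S⦄, x ≤ y → y ≤ z → y ∈ T

def orderAlgHull {S : Type*} [SemilatticeSup S] (A : Set S) : Set S :=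
  ⋂₀ {T | OrderAlgConvex T ∧ A ⊆ T}

lemma orderAlgHull_subset {S : Type*} [SemilatticeSup S] {A T : Set S}
    (hT : OrderAlgConvex T) (hAT : A ⊆ T) : orderAlgHull A ⊆ T :=
  Set.sInter_subset_of_mem ⟨hT, hAT⟩

/-- Description of the hull of `K ∪ {p}` for convex `K`. -/
lemma mem_hull_insert {S : Type*} [SemilatticeSup S] {K : Set S}
    (Kconv : OrderAlgConvex K) (k0 : S) (hk0 : k0 ∈ K) (p z : S)
    (hz : z ∈ orderAlgHull (K ∪ {p})) :
    z ∈ K ∨ ((∃ k ∈ K, z ≤ k ⊔ p) ∧ (p ≤ z ∨ ∃ k ∈ K, k ≤ z)) := by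
  set H : Set S := K ∪ {w | (∃ k ∈ K, w ≤ k ⊔ p) ∧ (p ≤ w ∨ ∃ k ∈ K, k ≤ w)} with hH
  have Hconv : OrderAlgConvex H := by
    constructor
    · rintro u (huK | ⟨⟨k, hk, huk⟩, hulow⟩) v (hvK | ⟨⟨k', hk', hvk'⟩, hvlow⟩)
      · exact Or.inl (Kconv.1 huK hvK)
      · refine Or.inr ⟨⟨u ⊔ k', Kconv.1 huK hk', ?_⟩, Or.inr ⟨u, huK, le_sup_left⟩⟩
        rw [sup_assoc]
        exact sup_le le_sup_left (hvk'.trans le_sup_right)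
      · refine Or.inr ⟨⟨v ⊔ k, Kconv.1 hvK hk, ?_⟩, Or.inr ⟨v, hvK, le_sup_right⟩⟩
        rw [sup_assoc]
        exact sup_le (huk.trans le_sup_right) le_sup_left
      · refine Or.inr ⟨⟨k ⊔ k', Kconv.1 hk hk', ?_⟩, ?_⟩
        · exact sup_le (huk.trans (sup_le_sup_right le_sup_left p))
            (hvk'.trans (sup_le_sup_right le_sup_right p))
        · rcases hulow with hpu | ⟨k'', hk'', hku⟩
          · exact Or.inl (hpu.trans le_sup_left)
          · exact Or.inr ⟨k'', hk'', hku.trans le_sup_left⟩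
    · rintro u v (huK | ⟨⟨k, hk, huk⟩, hulow⟩) (hvK | ⟨⟨k', hk', hvk'⟩, hvlow⟩) w huw hwv
      · exact Or.inl (Kconv.2 huK hvK huw hwv)
      · exact Or.inr ⟨⟨k', hk', hwv.trans hvk'⟩, Or.inr ⟨u, huK, huw⟩⟩
      · rcases hulow with hpu | ⟨k'', hk'', hku⟩
        · exact Or.inr ⟨⟨v, hvK, hwv.trans le_sup_left⟩, Or.inl (hpu.trans huw)⟩
        · exact Or.inl (Kconv.2 hk'' hvK (hku.trans huw) hwv)
      · refine Or.inr ⟨⟨k', hk', hwv.trans hvk'⟩, ?_⟩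
        rcases hulow with hpu | ⟨k'', hk'', hku⟩
        · exact Or.inl (hpu.trans huw)
        · exact Or.inr ⟨k'', hk'', hku.trans huw⟩
  have hsub : K ∪ {p} ⊆ H := by
    rintro w (hwK | rfl)
    · exact Or.inl hwK
    · exact Or.inr ⟨⟨k0, hk0, le_sup_right⟩, Or.inl le_rfl⟩
  exact orderAlgHull_subset Hconv hsub hz

/-- A semilattice with the order-algebraic convexity is a convex geometry iff it is
a tree, i.e. every principal filter is a chain. -/
theorem orderAlgConvexity_convexGeometry_iff_tree {S : Type*} [SemilatticeSup S] :
    (∀ K : Set S, OrderAlgConvex K → ∀ x y : S, x ≠ y → x ∉ K → y ∉ K →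
      y ∈ orderAlgHull (K ∪ {x}) → x ∉ orderAlgHull (K ∪ {y})) ↔
    ∀ x a b : S, x ≤ a → x ≤ b → a ≤ b ∨ b ≤ a := by
  constructor
  · intro H1 x a b hxa hxb
    by_contra hcon
    push_neg at hcon
    obtain ⟨hab, hba⟩ := hcon
    have Kconv : OrderAlgConvex (Set.Icc x a) := by
      constructor
      · intro p hp q hq
        exact ⟨hp.1.trans le_sup_left, sup_le hp.2 hq.2⟩
      · intro p q hp hq r hpr hrq
        exact ⟨hp.1.trans hpr, hrq.trans hq.2⟩
    have hxK : x ∈ Set.Icc x a := ⟨le_rfl, hxa⟩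
    have haK : a ∈ Set.Icc x a := ⟨hxa, le_rfl⟩
    have hne : a ⊔ b ≠ b := fun h => hab (le_sup_left.trans h.le)
    have hsK : a ⊔ b ∉ Set.Icc x a := fun h => hba (le_sup_right.trans h.2)
    have hbK : b ∉ Set.Icc x a := fun h => hba h.2
    have hbhull : b ∈ orderAlgHull (Set.Icc x a ∪ {a ⊔ b}) := by
      refine Set.mem_sInter.mpr ?_
      rintro T ⟨Tconv, hsub⟩
      exact Tconv.2 (hsub (Set.mem_union_left _ hxK))
        (hsub (Set.mem_union_right _ rfl)) hxb le_sup_right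
    have hshull : a ⊔ b ∈ orderAlgHull (Set.Icc x a ∪ {b}) := by
      refine Set.mem_sInter.mpr ?_
      rintro T ⟨Tconv, hsub⟩
      exact Tconv.1 (hsub (Set.mem_union_left _ haK)) (hsub (Set.mem_union_right _ rfl))
    exact H1 (Set.Icc x a) Kconv (a ⊔ b) b hne hsK hbK hbhull hshull
  · intro H2 K Kconv x y hxy hxK hyK hyhull hxhull
    rcases Set.eq_empty_or_nonempty K with hKe | ⟨k0, hk0⟩
    · have hxconv : OrderAlgConvex ({x} : Set S) := by
        constructor
        · rintro p rfl q rfl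
          simp
        · rintro p q rfl rfl r h1 h2
          exact le_antisymm h2 h1
      have hsub : K ∪ {x} ⊆ ({x} : Set S) := by
        rw [hKe]; simp
      have : y ∈ ({x} : Set S) := orderAlgHull_subset hxconv hsub hyhull
      exact hxy this.symm
    · rcases mem_hull_insert Kconv k0 hk0 x y hyhull with hyK' | ⟨⟨k1, hk1, hy1⟩, hylow⟩
      · exact hyK hyK'
      rcases mem_hull_insert Kconv k0 hk0 y x hxhull with hxK' | ⟨⟨k3, hk3, hx3⟩, hxlow⟩
      · exact hxK hxK'
      obtain ⟨k2, hk2, hk2y, k4, hk4, hk4x⟩ :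
          ∃ k2 ∈ K, k2 ≤ y ∧ ∃ k4 ∈ K, k4 ≤ x := by
        rcases hylow with h | ⟨k2, hk2, h2⟩ <;> rcases hxlow with h' | ⟨k4, hk4, h4⟩
        · exact absurd (le_antisymm h h') hxy
        · exact ⟨k4, hk4, h4.trans h, k4, hk4, h4⟩
        · exact ⟨k2, hk2, h2, k2, hk2, h2.trans h'⟩
        · exact ⟨k2, hk2, h2, k4, hk4, h4⟩
      rcases H2 k4 x (k4 ⊔ k1) hk4x le_sup_left with h | h
      · exact hxK (Kconv.2 hk4 (Kconv.1 hk4 hk1) hk4x h)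
      · have hk1x : k1 ≤ x := le_sup_right.trans h
        have hyx : y ≤ x := hy1.trans (sup_le hk1x le_rfl)
        rcases H2 k2 y (k2 ⊔ k3) hk2y le_sup_left with h' | h'
        · exact hyK (Kconv.2 hk2 (Kconv.1 hk2 hk3) hk2y h')
        · have hk3y : k3 ≤ y := le_sup_right.trans h'
          have : x ≤ y := hx3.trans (sup_le hk3y le_rfl)
          exact hxy (le_antisymm this hyx)
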